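/- Let A(u) ∈ ℝ^{N×N}, B(u) ∈ ℝ^{N×m}, C(u) ∈ ℝ^{r×N} depend continuously differentiably on a parameter u in an open subset of a finite-dimensional real vector space, with A(u) Hurwitz for all u. Define E(u) := (1/2) trace(C(u)ᵀ C(u) P(u)) where P(u) solves A(u)P + P A(u)ᵀ + B(u)B(u)ᵀ = 0. Then E is continuously differentiable and its directional derivative along v is D_v E = ⟨H, D_v A⟩ + ⟨Q B, D_v B⟩ + ⟨C P, D_v C⟩, where Q(u) solves A(u)ᵀQ + Q A(u) + C(u)ᵀC(u) = 0 and H := QP. -/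

import Mathlib

open Matrix

attribute [local instance] Matrix.frobeniusNormedAddCommGroup Matrix.frobeniusNormedSpace

/-- A real square matrix is Hurwitz if every (complex) eigenvalue has
strictly negative real part. -/
def IsHurwitz {N : ℕ} (A : Matrix (Fin N) (Fin N) ℝ) : Prop :=
  ∀ μ ∈ spectrum ℂ (A.map (Complex.ofReal)), μ.re < 0

section Spectral
open Polynomial
variable {N : ℕ}

/-- roots of minpoly lie in the spectrum (complex matrices) -/
lemma root_minpoly_mem_spectrum (M : Matrix (Fin N) (Fin N) ℂ) {μ : ℂ}
    (h : (minpoly ℂ M).IsRoot μ) : μ ∈ spectrum ℂ M := by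
  let e := Matrix.toLinAlgEquiv (Pi.basisFun ℂ (Fin N))
  rw [← AlgEquiv.spectrum_eq e M]
  rw [← minpoly.algEquiv_eq e M] at h
  exact Module.End.hasEigenvalue_iff_mem_spectrum.mp
    (Module.End.hasEigenvalue_iff_isRoot.mpr h)

lemma pow_comm_of_sylvester {A B X : Matrix (Fin N) (Fin N) ℂ} (h : A * X = X * B) :
    ∀ q : ℂ[X], (aeval A q) * X = X * (aeval B q) := by
  intro q
  induction q using Polynomial.induction_on' with
  | add p q hp hq => simp [map_add, add_mul, mul_add, hp, hq]
  | monomial n a =>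
    have hn : ∀ k : ℕ, A ^ k * X = X * B ^ k := by
      intro k
      induction k with
      | zero => simp
      | succ k ih => rw [pow_succ, pow_succ, mul_assoc, h, ← mul_assoc, ih, mul_assoc]
    simp only [aeval_monomial]
    rw [mul_assoc, hn n, ← mul_assoc, ← mul_assoc, Algebra.commutes]

lemma isUnit_aeval_of_roots_notin_spectrum (A : Matrix (Fin N) (Fin N) ℂ) {p : ℂ[X]}
    (hp : p ≠ 0) (hroots : ∀ μ : ℂ, p.IsRoot μ → μ ∉ spectrum ℂ A) :
    IsUnit (aeval A p) := by
  have hsplit : Splits p := IsAlgClosed.splits p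
  have hfac := hsplit.eq_prod_roots
  rw [hfac, _root_.map_mul]
  apply IsUnit.mul
  · have : (p.leadingCoeff) ≠ 0 := leadingCoeff_ne_zero.mpr hp
    rw [aeval_C]
    exact (IsUnit.mk0 _ this).map (algebraMap ℂ (Matrix (Fin N) (Fin N) ℂ))
  · have key : ∀ m : Multiset ℂ, (∀ a ∈ m, a ∉ spectrum ℂ A) →
        IsUnit (aeval A ((m.map fun a => X - C a)).prod) := by
      intro m
      induction m using Multiset.induction_on with
      | empty => simp
      | cons a s ih =>
        intro h
        rw [Multiset.map_cons, Multiset.prod_cons, _root_.map_mul]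
        apply IsUnit.mul
        · have hna := h a (Multiset.mem_cons_self a s)
          rw [spectrum.mem_iff, not_not] at hna
          have : (aeval A) (X - C a) = -((algebraMap ℂ (Matrix (Fin N) (Fin N) ℂ)) a - A) := by
            rw [map_sub, aeval_X, aeval_C, neg_sub]
          rw [this]
          exact hna.neg
        · exact ih fun b hb => h b (Multiset.mem_cons_of_mem hb)
    apply key
    intro a ha
    exact hroots a (isRoot_of_mem_roots ha)

lemma IsHurwitz.lyap_eq_zero {A X : Matrix (Fin N) (Fin N) ℝ} (hA : IsHurwitz A)
    (hX : A * X + X * Aᵀ = 0) : X = 0 := by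
  set φ := Complex.ofRealHom with hφ
  set Ac := A.map φ with hAc
  set Xc := X.map φ with hXc
  have hmapT : (Aᵀ).map φ = Acᵀ := (Matrix.transpose_map).symm ▸ rfl
  have hc0 : Ac * Xc + Xc * Acᵀ = 0 := by
    ext i j
    have h0 := congrFun (congrFun hX i) j
    simp only [Matrix.add_apply, Matrix.mul_apply, Matrix.zero_apply,
      Matrix.transpose_apply] at h0 ⊢
    simp only [hAc, hXc, Matrix.map_apply, hφ, Complex.ofRealHom_eq_coe]
    exact_mod_cast congrArg (Complex.ofReal) h0
  have hc : Ac * Xc = Xc * (-Acᵀ) := by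
    rw [mul_neg]
    exact eq_neg_of_add_eq_zero_left hc0
  set B := -Acᵀ with hB
  have hint : IsIntegral ℂ B := Algebra.IsIntegral.isIntegral B
  have hpne : minpoly ℂ B ≠ 0 := minpoly.ne_zero hint
  have hspecT : ∀ z : ℂ, z ∈ spectrum ℂ (Acᵀ) ↔ z ∈ spectrum ℂ Ac := by
    intro z
    rw [spectrum.mem_iff, spectrum.mem_iff, not_iff_not]
    have : (algebraMap ℂ (Matrix (Fin N) (Fin N) ℂ)) z - Acᵀ
        = ((algebraMap ℂ (Matrix (Fin N) (Fin N) ℂ)) z - Ac)ᵀ := by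
      rw [Matrix.transpose_sub, Algebra.algebraMap_eq_smul_one, Matrix.transpose_smul,
        Matrix.transpose_one]
    rw [this, Matrix.isUnit_iff_isUnit_det, Matrix.det_transpose,
      ← Matrix.isUnit_iff_isUnit_det]
  have hroots : ∀ μ : ℂ, (minpoly ℂ B).IsRoot μ → μ ∉ spectrum ℂ Ac := by
    intro μ hroot hmem
    have h1 : μ ∈ spectrum ℂ B := root_minpoly_mem_spectrum B hroot
    have h2 : -μ ∈ spectrum ℂ (Acᵀ) := by
      rw [hB] at h1
      rw [← spectrum.neg_eq] at h1
      simpa using h1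
    have h3 : -μ ∈ spectrum ℂ Ac := (hspecT _).mp h2
    have := hA μ hmem
    have := hA (-μ) h3
    simp at this
    linarith
  have hu : IsUnit (aeval Ac (minpoly ℂ B)) :=
    isUnit_aeval_of_roots_notin_spectrum Ac hpne hroots
  have hzero : (aeval Ac (minpoly ℂ B)) * Xc = 0 := by
    rw [pow_comm_of_sylvester hc (minpoly ℂ B), minpoly.aeval, mul_zero]
  have hXc2 : Xc = 0 := by
    have := hu.mul_left_cancel (by rw [hzero, mul_zero] : (aeval Ac (minpoly ℂ B)) * Xc
      = (aeval Ac (minpoly ℂ B)) * 0)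
    exact this
  ext i j
  have h5 : Xc i j = (0 : Matrix (Fin N) (Fin N) ℂ) i j := by rw [hXc2]
  rw [hXc] at h5
  simp only [Matrix.map_apply, Matrix.zero_apply, hφ, Complex.ofRealHom_eq_coe,
    Complex.ofReal_eq_zero] at h5
  simpa using h5

end Spectral

noncomputable abbrev frobTop (m n : Type*) [Fintype m] [Fintype n] :
    TopologicalSpace (Matrix m n ℝ) :=
  (Matrix.frobeniusNormedAddCommGroup : NormedAddCommGroup (Matrix m n ℝ)).toUniformSpace.toTopologicalSpace

attribute [local instance] frobTop

section CLM
variable (a b c : ℕ)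

noncomputable def mulCLM :
    Matrix (Fin a) (Fin b) ℝ →L[ℝ] Matrix (Fin b) (Fin c) ℝ →L[ℝ] Matrix (Fin a) (Fin c) ℝ :=
  LinearMap.toContinuousLinearMap <|
    (LinearMap.toContinuousLinearMap.toLinearMap).comp <|
      LinearMap.mk₂ ℝ (· * ·) Matrix.add_mul (fun t M X => Matrix.smul_mul t M X) Matrix.mul_add
        (fun t M X => Matrix.mul_smul M t X)

@[simp] lemma mulCLM_apply (M : Matrix (Fin a) (Fin b) ℝ) (X : Matrix (Fin b) (Fin c) ℝ) :
    mulCLM a b c M X = M * X := by rfl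

noncomputable def transCLM : Matrix (Fin a) (Fin b) ℝ →L[ℝ] Matrix (Fin b) (Fin a) ℝ :=
  LinearMap.toContinuousLinearMap (Matrix.transposeLinearEquiv (Fin a) (Fin b) ℝ ℝ).toLinearMap

@[simp] lemma transCLM_apply (M : Matrix (Fin a) (Fin b) ℝ) : transCLM a b M = Mᵀ := by rfl

noncomputable def traceCLM : Matrix (Fin a) (Fin a) ℝ →L[ℝ] ℝ :=
  LinearMap.toContinuousLinearMap (Matrix.traceLinearMap (Fin a) ℝ ℝ)

@[simp] lemma traceCLM_apply (M : Matrix (Fin a) (Fin a) ℝ) : traceCLM a M = M.trace := by rfl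

end CLM

section DerivHelp
variable {a b c : ℕ} {f : ℝ → Matrix (Fin a) (Fin b) ℝ} {g : ℝ → Matrix (Fin b) (Fin c) ℝ}
  {f' : Matrix (Fin a) (Fin b) ℝ} {g' : Matrix (Fin b) (Fin c) ℝ} {t : ℝ}

lemma HasDerivAt.matMul (hf : HasDerivAt f f' t) (hg : HasDerivAt g g' t) :
    HasDerivAt (fun s => f s * g s) (f' * g t + f t * g') t := by
  have h1 : HasDerivAt (fun s => mulCLM a b c (f s)) (mulCLM a b c f') t :=
    (mulCLM a b c).hasFDerivAt.comp_hasDerivAt t hf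
  simpa using h1.clm_apply hg

lemma HasDerivAt.matTrans (hf : HasDerivAt f f' t) :
    HasDerivAt (fun s => (f s)ᵀ) f'ᵀ t := by
  simpa [Function.comp_def] using (transCLM a b).hasFDerivAt.comp_hasDerivAt t hf

lemma HasDerivAt.matTrace {h : ℝ → Matrix (Fin a) (Fin a) ℝ} {h' : Matrix (Fin a) (Fin a) ℝ}
    (hf : HasDerivAt h h' t) : HasDerivAt (fun s => (h s).trace) h'.trace t := by
  simpa [Function.comp_def] using (traceCLM a).hasFDerivAt.comp_hasDerivAt t hf

end DerivHelp

section SmoothHelp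
variable {V : Type*} [NormedAddCommGroup V] [NormedSpace ℝ V]
  {a b c : ℕ} {s : Set V} {f : V → Matrix (Fin a) (Fin b) ℝ} {g : V → Matrix (Fin b) (Fin c) ℝ}
  {n : WithTop ℕ∞}

lemma ContDiffOn.matMul (hf : ContDiffOn ℝ n f s) (hg : ContDiffOn ℝ n g s) :
    ContDiffOn ℝ n (fun u => f u * g u) s := by
  have h1 : ContDiffOn ℝ n (fun u => mulCLM a b c (f u)) s :=
    (mulCLM a b c).contDiff.comp_contDiffOn hf
  simpa using h1.clm_apply hg

lemma ContDiffOn.matTrans (hf : ContDiffOn ℝ n f s) :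
    ContDiffOn ℝ n (fun u => (f u)ᵀ) s := by
  simpa [Function.comp_def] using (transCLM a b).contDiff.comp_contDiffOn hf

lemma ContDiffOn.matTrace {h : V → Matrix (Fin a) (Fin a) ℝ} (hf : ContDiffOn ℝ n h s) :
    ContDiffOn ℝ n (fun u => (h u).trace) s := by
  simpa [Function.comp_def] using (traceCLM a).contDiff.comp_contDiffOn hf

end SmoothHelp

section Lyap
variable {N : ℕ}

noncomputable def lyapL (M : Matrix (Fin N) (Fin N) ℝ) :
    Matrix (Fin N) (Fin N) ℝ →ₗ[ℝ] Matrix (Fin N) (Fin N) ℝ where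
  toFun X := M * X + X * Mᵀ
  map_add' X Y := by noncomm_ring
  map_smul' t X := by
    simp [Matrix.smul_mul, Matrix.mul_smul, smul_add]

noncomputable def lyapCLM (M : Matrix (Fin N) (Fin N) ℝ) :
    Matrix (Fin N) (Fin N) ℝ →L[ℝ] Matrix (Fin N) (Fin N) ℝ :=
  LinearMap.toContinuousLinearMap (lyapL M)

@[simp] lemma lyapCLM_apply (M X : Matrix (Fin N) (Fin N) ℝ) :
    lyapCLM M X = M * X + X * Mᵀ := by rfl

noncomputable def lyapBig :
    Matrix (Fin N) (Fin N) ℝ →L[ℝ]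
      (Matrix (Fin N) (Fin N) ℝ →L[ℝ] Matrix (Fin N) (Fin N) ℝ) :=
  LinearMap.toContinuousLinearMap
    { toFun := lyapCLM
      map_add' := fun M M' => by
        ext X
        simp [Matrix.add_mul, Matrix.mul_add, Matrix.transpose_add]
        abel
      map_smul' := fun t M => by
        ext X
        simp [Matrix.smul_mul, Matrix.mul_smul, Matrix.transpose_smul, smul_add, mul_add] }

@[simp] lemma lyapBig_apply (M : Matrix (Fin N) (Fin N) ℝ) : lyapBig M = lyapCLM M := by rfl

/-- For Hurwitz `A`, the Lyapunov operator is a unit in the CLM-endomorphism ring. -/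
noncomputable def lyapUnit {A : Matrix (Fin N) (Fin N) ℝ} (hA : IsHurwitz A) :
    (Matrix (Fin N) (Fin N) ℝ →L[ℝ] Matrix (Fin N) (Fin N) ℝ)ˣ := by
  have hinj : Function.Injective (lyapL A) := by
    rw [← LinearMap.ker_eq_bot, LinearMap.ker_eq_bot']
    intro X hX
    exact hA.lyap_eq_zero hX
  have hbij : Function.Bijective (lyapL A) :=
    ⟨hinj, (LinearMap.injective_iff_surjective).mp hinj⟩
  let e := LinearEquiv.ofBijective (lyapL A) hbij
  let ce := e.toContinuousLinearEquiv
  exact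
    { val := lyapCLM A
      inv := (ce.symm : _ →L[ℝ] _)
      val_inv := ContinuousLinearMap.ext fun X => by
        rw [ContinuousLinearMap.mul_apply, ContinuousLinearMap.one_apply]
        exact ce.apply_symm_apply X
      inv_val := ContinuousLinearMap.ext fun X => by
        rw [ContinuousLinearMap.mul_apply, ContinuousLinearMap.one_apply]
        exact ce.symm_apply_apply X }

@[simp] lemma lyapUnit_val {A : Matrix (Fin N) (Fin N) ℝ} (hA : IsHurwitz A) :
    (lyapUnit hA : Matrix (Fin N) (Fin N) ℝ →L[ℝ] Matrix (Fin N) (Fin N) ℝ) = lyapCLM A := rfl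

end Lyap

lemma lyap_sol_contDiffOn {V : Type*} [NormedAddCommGroup V] [NormedSpace ℝ V]
    {N : ℕ} {U₀ : Set V} (hU₀ : IsOpen U₀)
    {A : V → Matrix (Fin N) (Fin N) ℝ} (hA : ContDiffOn ℝ 1 A U₀)
    (hHur : ∀ u ∈ U₀, IsHurwitz (A u))
    {W P : V → Matrix (Fin N) (Fin N) ℝ} (hW : ContDiffOn ℝ 1 W U₀)
    (hP : ∀ u ∈ U₀, A u * P u + P u * (A u)ᵀ + W u = 0) :
    ContDiffOn ℝ 1 P U₀ := by
  have hL : ContDiffOn ℝ 1 (fun u => lyapCLM (A u)) U₀ := by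
    simpa [Function.comp_def] using (lyapBig (N := N)).contDiff.comp_contDiffOn hA
  have hInv : ContDiffOn ℝ 1 (fun u => Ring.inverse (lyapCLM (A u))) U₀ := by
    intro u hu
    have h1 : ContDiffAt ℝ 1 Ring.inverse (lyapCLM (A u)) := by
      simpa using contDiffAt_ringInverse ℝ (lyapUnit (hHur u hu))
    exact (h1.comp u ((hL u hu).contDiffAt (hU₀.mem_nhds hu))).contDiffWithinAt
  have key : ∀ u ∈ U₀, P u = Ring.inverse (lyapCLM (A u)) (-(W u)) := by
    intro u hu
    have hW0 : lyapCLM (A u) (P u) = -(W u) := by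
      rw [lyapCLM_apply]
      exact eq_neg_of_add_eq_zero_left (hP u hu)
    rw [show lyapCLM (A u) = ((lyapUnit (hHur u hu) : _ →L[ℝ] _)) from rfl, Ring.inverse_unit,
      ← hW0]
    rw [show lyapCLM (A u) = ((lyapUnit (hHur u hu) : _ →L[ℝ] _)) from rfl]
    rw [← ContinuousLinearMap.mul_apply, Units.inv_mul, ContinuousLinearMap.one_apply]
  exact (hInv.clm_apply hW.neg).congr key

lemma IsHurwitz.transpose {N : ℕ} {A : Matrix (Fin N) (Fin N) ℝ} (hA : IsHurwitz A) :
    IsHurwitz Aᵀ := by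
  intro μ hμ
  apply hA μ
  rw [Matrix.transpose_map] at hμ
  set Ac := A.map Complex.ofReal
  rw [spectrum.mem_iff] at hμ ⊢
  intro hcon
  apply hμ
  have : (algebraMap ℂ (Matrix (Fin N) (Fin N) ℂ)) μ - Acᵀ
      = ((algebraMap ℂ (Matrix (Fin N) (Fin N) ℂ)) μ - Ac)ᵀ := by
    rw [Matrix.transpose_sub, Algebra.algebraMap_eq_smul_one, Matrix.transpose_smul,
      Matrix.transpose_one]
  rw [this, Matrix.isUnit_iff_isUnit_det, Matrix.det_transpose, ← Matrix.isUnit_iff_isUnit_det]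
  exact hcon

/-- Differentiability of the LQG cost `E(u) = (1/2)⟨C(u)ᵀC(u), P(u)⟩` for
parameter-dependent state-space matrices, with directional derivative
`D_v E = ⟨H, D_v A⟩ + ⟨Q B, D_v B⟩ + ⟨C P, D_v C⟩` where `H = QP`. -/
theorem lqg_cost_directional_derivative
    {V : Type*} [NormedAddCommGroup V] [NormedSpace ℝ V] [FiniteDimensional ℝ V]
    {N m r : ℕ}
    (U₀ : Set V) (hU₀ : IsOpen U₀)
    (A : V → Matrix (Fin N) (Fin N) ℝ)
    (B : V → Matrix (Fin N) (Fin m) ℝ)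
    (C : V → Matrix (Fin r) (Fin N) ℝ)
    (hA : ContDiffOn ℝ 1 A U₀) (hB : ContDiffOn ℝ 1 B U₀) (hC : ContDiffOn ℝ 1 C U₀)
    (hHur : ∀ u ∈ U₀, IsHurwitz (A u))
    (P Q : V → Matrix (Fin N) (Fin N) ℝ)
    (hP : ∀ u ∈ U₀, A u * P u + P u * (A u)ᵀ + B u * (B u)ᵀ = 0)
    (hQ : ∀ u ∈ U₀, (A u)ᵀ * Q u + Q u * A u + (C u)ᵀ * C u = 0)
    (E : V → ℝ)
    (hE : ∀ u ∈ U₀, E u = (1/2 : ℝ) * (((C u)ᵀ * C u)ᵀ * P u).trace)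
    (A' : V → V → Matrix (Fin N) (Fin N) ℝ)
    (B' : V → V → Matrix (Fin N) (Fin m) ℝ)
    (C' : V → V → Matrix (Fin r) (Fin N) ℝ)
    (hA' : ∀ u ∈ U₀, ∀ v, HasLineDerivAt ℝ A (A' u v) u v)
    (hB' : ∀ u ∈ U₀, ∀ v, HasLineDerivAt ℝ B (B' u v) u v)
    (hC' : ∀ u ∈ U₀, ∀ v, HasLineDerivAt ℝ C (C' u v) u v) :
    ContDiffOn ℝ 1 E U₀ ∧
    ∀ u ∈ U₀, ∀ v : V,
      HasLineDerivAt ℝ E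
        (((Q u * P u)ᵀ * A' u v).trace + ((Q u * B u)ᵀ * B' u v).trace
          + ((C u * P u)ᵀ * C' u v).trace) u v := by
  -- Smoothness of the coefficient data
  have hW_P : ContDiffOn ℝ 1 (fun u => B u * (B u)ᵀ) U₀ := hB.matMul hB.matTrans
  have hW_Q : ContDiffOn ℝ 1 (fun u => (C u)ᵀ * C u) U₀ := hC.matTrans.matMul hC
  have hPs : ContDiffOn ℝ 1 P U₀ := lyap_sol_contDiffOn hU₀ hA hHur hW_P hP
  have hQs : ContDiffOn ℝ 1 Q U₀ := by
    apply lyap_sol_contDiffOn hU₀ hA.matTrans (fun u hu => (hHur u hu).transpose) hW_Q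
    intro u hu
    rw [Matrix.transpose_transpose]
    exact hQ u hu
  have hPsym : ∀ u ∈ U₀, (P u)ᵀ = P u := by
    intro u hu
    have h1 := hP u hu
    have h2 := congrArg Matrix.transpose h1
    simp only [Matrix.transpose_add, Matrix.transpose_mul, Matrix.transpose_transpose,
      Matrix.transpose_zero] at h2
    have e1 : A u * P u + P u * (A u)ᵀ = -(B u * (B u)ᵀ) := eq_neg_of_add_eq_zero_left h1
    have e2 : A u * (P u)ᵀ + (P u)ᵀ * (A u)ᵀ = -(B u * (B u)ᵀ) := by
      rw [add_comm]; exact eq_neg_of_add_eq_zero_left h2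
    have h3 : A u * (P u - (P u)ᵀ) + (P u - (P u)ᵀ) * (A u)ᵀ = 0 := by
      calc A u * (P u - (P u)ᵀ) + (P u - (P u)ᵀ) * (A u)ᵀ
          = (A u * P u + P u * (A u)ᵀ) - (A u * (P u)ᵀ + (P u)ᵀ * (A u)ᵀ) := by
            rw [Matrix.mul_sub, Matrix.sub_mul]; abel
        _ = 0 := by rw [e1, e2, sub_self]
    exact (sub_eq_zero.mp ((hHur u hu).lyap_eq_zero h3)).symm
  have hQsym : ∀ u ∈ U₀, (Q u)ᵀ = Q u := by
    intro u hu
    have h1 := hQ u hu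
    have h2 := congrArg Matrix.transpose h1
    simp only [Matrix.transpose_add, Matrix.transpose_mul, Matrix.transpose_transpose,
      Matrix.transpose_zero] at h2
    have e1 : (A u)ᵀ * Q u + Q u * A u = -((C u)ᵀ * C u) := eq_neg_of_add_eq_zero_left h1
    have e2 : (A u)ᵀ * (Q u)ᵀ + (Q u)ᵀ * A u = -((C u)ᵀ * C u) := by
      rw [add_comm]; exact eq_neg_of_add_eq_zero_left h2
    have h3 : (A u)ᵀ * (Q u - (Q u)ᵀ) + (Q u - (Q u)ᵀ) * ((A u)ᵀ)ᵀ = 0 := by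
      rw [Matrix.transpose_transpose]
      calc (A u)ᵀ * (Q u - (Q u)ᵀ) + (Q u - (Q u)ᵀ) * A u
          = ((A u)ᵀ * Q u + Q u * A u) - ((A u)ᵀ * (Q u)ᵀ + (Q u)ᵀ * A u) := by
            rw [Matrix.mul_sub, Matrix.sub_mul]; abel
        _ = 0 := by rw [e1, e2, sub_self]
    exact (sub_eq_zero.mp ((hHur u hu).transpose.lyap_eq_zero h3)).symm
  have hEs : ContDiffOn ℝ 1 E U₀ := by
    have hform : ContDiffOn ℝ 1 (fun u => (1/2 : ℝ) * ((((C u)ᵀ * C u)ᵀ) * P u).trace) U₀ :=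
      contDiffOn_const.mul ((hW_Q.matTrans.matMul hPs).matTrace)
    exact hform.congr hE
  refine ⟨hEs, fun u hu v => ?_⟩
  have h0 : u + (0:ℝ) • v = u := by simp
  have hAd : HasDerivAt (fun t : ℝ => A (u + t • v)) (A' u v) 0 := hA' u hu v
  have hBd : HasDerivAt (fun t : ℝ => B (u + t • v)) (B' u v) 0 := hB' u hu v
  have hCd : HasDerivAt (fun t : ℝ => C (u + t • v)) (C' u v) 0 := hC' u hu v
  have hPdiff : DifferentiableAt ℝ P u :=
    ((hPs u hu).contDiffAt (hU₀.mem_nhds hu)).differentiableAt one_ne_zero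
  have hγ : HasDerivAt (fun t : ℝ => u + t • v) v 0 := by
    simpa using ((hasDerivAt_id (0:ℝ)).smul_const v).const_add u
  have hF : HasFDerivAt P (fderiv ℝ P u) (u + (0:ℝ) • v) := by
    rw [h0]; exact hPdiff.hasFDerivAt
  have hPd : HasDerivAt (fun t : ℝ => P (u + t • v)) (fderiv ℝ P u v) 0 := by
    have := hF.comp_hasDerivAt 0 hγ
    simpa [Function.comp_def] using this
  set P' : Matrix (Fin N) (Fin N) ℝ := fderiv ℝ P u v with hP'def
  have hmem : ∀ᶠ t : ℝ in nhds 0, u + t • v ∈ U₀ := by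
    have hcont : ContinuousAt (fun t : ℝ => u + t • v) 0 := hγ.continuousAt
    exact hcont.preimage_mem_nhds (by rw [h0]; exact hU₀.mem_nhds hu)
  -- differentiate the Lyapunov constraint along the line
  have hZc := ((hAd.matMul hPd).add (hPd.matMul hAd.matTrans)).add (hBd.matMul hBd.matTrans)
  rw [h0] at hZc
  have hZ0 : HasDerivAt (fun t : ℝ => A (u+t•v) * P (u+t•v) + P (u+t•v) * (A (u+t•v))ᵀ
      + B (u+t•v) * (B (u+t•v))ᵀ) 0 0 := by
    apply (hasDerivAt_const (0:ℝ) (0 : Matrix (Fin N) (Fin N) ℝ)).congr_of_eventuallyEq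
    filter_upwards [hmem] with t ht
    exact hP _ ht
  have hZ := hZc.unique hZ0
  -- differentiate E along the line
  have hEd0 := HasDerivAt.const_mul (1/2 : ℝ)
    (((hCd.matTrans.matMul hCd).matTrans.matMul hPd).matTrace)
  rw [h0] at hEd0
  have hEd : HasDerivAt (fun t : ℝ => E (u + t • v))
      ((1/2 : ℝ) * (((C' u v)ᵀ * C u + (C u)ᵀ * C' u v)ᵀ * P u
        + ((C u)ᵀ * C u)ᵀ * P').trace) 0 := by
    apply hEd0.congr_of_eventuallyEq
    filter_upwards [hmem] with t ht
    exact hE _ ht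
  have hps := hPsym u hu
  have hqs := hQsym u hu
  -- trace identities
  have h3 := congrArg (fun M => (M * P').trace) (hQ u hu)
  simp only [Matrix.add_mul, Matrix.trace_add, Matrix.zero_mul, Matrix.trace_zero] at h3
  have h4 := congrArg (fun M => (Q u * M).trace) hZ
  simp only [Matrix.mul_add, Matrix.trace_add, Matrix.mul_zero, Matrix.trace_zero] at h4
  have i1 : (((A u)ᵀ * Q u) * P').trace = (Q u * (P' * (A u)ᵀ)).trace := by
    calc (((A u)ᵀ * Q u) * P').trace = ((A u)ᵀ * (Q u * P')).trace := by rw [Matrix.mul_assoc]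
      _ = ((Q u * P') * (A u)ᵀ).trace := Matrix.trace_mul_comm _ _
      _ = (Q u * (P' * (A u)ᵀ)).trace := by rw [Matrix.mul_assoc]
  have i2 : ((Q u * A u) * P').trace = (Q u * (A u * P')).trace := by rw [Matrix.mul_assoc]
  have i3 : (Q u * (A' u v * P u)).trace = ((Q u * P u)ᵀ * A' u v).trace := by
    calc (Q u * (A' u v * P u)).trace = ((Q u * A' u v) * P u).trace := by rw [Matrix.mul_assoc]
      _ = (P u * (Q u * A' u v)).trace := Matrix.trace_mul_comm _ _
      _ = ((P u * Q u) * A' u v).trace := by rw [Matrix.mul_assoc]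
      _ = ((Q u * P u)ᵀ * A' u v).trace := by rw [Matrix.transpose_mul, hps, hqs]
  have i4 : (Q u * (P u * (A' u v)ᵀ)).trace = ((Q u * P u)ᵀ * A' u v).trace := by
    calc (Q u * (P u * (A' u v)ᵀ)).trace = ((Q u * P u) * (A' u v)ᵀ).trace := by
          rw [Matrix.mul_assoc]
      _ = (((Q u * P u) * (A' u v)ᵀ)ᵀ).trace := (Matrix.trace_transpose _).symm
      _ = (A' u v * (Q u * P u)ᵀ).trace := by
          rw [Matrix.transpose_mul, Matrix.transpose_transpose]
      _ = ((Q u * P u)ᵀ * A' u v).trace := Matrix.trace_mul_comm _ _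
  have i5 : (Q u * (B' u v * (B u)ᵀ)).trace = ((Q u * B u)ᵀ * B' u v).trace := by
    calc (Q u * (B' u v * (B u)ᵀ)).trace = ((Q u * B' u v) * (B u)ᵀ).trace := by
          rw [Matrix.mul_assoc]
      _ = ((B u)ᵀ * (Q u * B' u v)).trace := Matrix.trace_mul_comm _ _
      _ = (((B u)ᵀ * Q u) * B' u v).trace := by rw [Matrix.mul_assoc]
      _ = ((Q u * B u)ᵀ * B' u v).trace := by rw [Matrix.transpose_mul, hqs]
  have i6 : (Q u * (B u * (B' u v)ᵀ)).trace = ((Q u * B u)ᵀ * B' u v).trace := by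
    calc (Q u * (B u * (B' u v)ᵀ)).trace = ((Q u * B u) * (B' u v)ᵀ).trace := by
          rw [Matrix.mul_assoc]
      _ = (((Q u * B u) * (B' u v)ᵀ)ᵀ).trace := (Matrix.trace_transpose _).symm
      _ = (B' u v * (Q u * B u)ᵀ).trace := by
          rw [Matrix.transpose_mul, Matrix.transpose_transpose]
      _ = ((Q u * B u)ᵀ * B' u v).trace := Matrix.trace_mul_comm _ _
  have i7a : (((C' u v)ᵀ * C u)ᵀ * P u).trace = ((C u * P u)ᵀ * C' u v).trace := by
    calc (((C' u v)ᵀ * C u)ᵀ * P u).trace = (((C u)ᵀ * C' u v) * P u).trace := by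
          rw [Matrix.transpose_mul, Matrix.transpose_transpose]
      _ = (P u * ((C u)ᵀ * C' u v)).trace := Matrix.trace_mul_comm _ _
      _ = ((P u * (C u)ᵀ) * C' u v).trace := by rw [Matrix.mul_assoc]
      _ = ((C u * P u)ᵀ * C' u v).trace := by rw [Matrix.transpose_mul, hps]
  have i7b : (((C u)ᵀ * C' u v)ᵀ * P u).trace = ((C u * P u)ᵀ * C' u v).trace := by
    calc (((C u)ᵀ * C' u v)ᵀ * P u).trace = (((C' u v)ᵀ * C u) * P u).trace := by
          rw [Matrix.transpose_mul, Matrix.transpose_transpose]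
      _ = ((C' u v)ᵀ * (C u * P u)).trace := by rw [Matrix.mul_assoc]
      _ = ((C u * P u) * (C' u v)ᵀ).trace := Matrix.trace_mul_comm _ _
      _ = (((C u * P u) * (C' u v)ᵀ)ᵀ).trace := (Matrix.trace_transpose _).symm
      _ = (C' u v * (C u * P u)ᵀ).trace := by
          rw [Matrix.transpose_mul, Matrix.transpose_transpose]
      _ = ((C u * P u)ᵀ * C' u v).trace := Matrix.trace_mul_comm _ _
  have i8 : (((C u)ᵀ * C u)ᵀ * P').trace = (((C u)ᵀ * C u) * P').trace := by
    rw [Matrix.transpose_mul, Matrix.transpose_transpose]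
  have key : (1/2 : ℝ) * (((C' u v)ᵀ * C u + (C u)ᵀ * C' u v)ᵀ * P u
        + ((C u)ᵀ * C u)ᵀ * P').trace
      = ((Q u * P u)ᵀ * A' u v).trace + ((Q u * B u)ᵀ * B' u v).trace
        + ((C u * P u)ᵀ * C' u v).trace := by
    rw [Matrix.trace_add, Matrix.transpose_add, Matrix.add_mul, Matrix.trace_add]
    linarith [h3, h4, i1, i2, i3, i4, i5, i6, i7a, i7b, i8]
  rw [key] at hEd
  exact hEd
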